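/- For every nonnegative integer n and every index 𝐤 = (k_1,…,k_r), one has ∑_{i=0}^{n} {}_iI_{n-i}(𝐤) = σ_n(I_0(𝐤)) in 𝓘, where I_0 = {}_0I_0. -/

import Mathlib

/-- Indices: finite sequences of positive integers (modeled as lists of naturals). -/
abbrev Idx := List ℕ

/-- The ℚ-vector space 𝓘 on the set of indices. -/
abbrev Ical := Idx →₀ ℚ

/-- Auxiliary harmonic product on reversed lists (cons = append at the end). -/
noncomputable def harmAux : Idx → Idx → Ical
  | [], l => Finsupp.single l 1
  | a :: k, [] => Finsupp.single (a :: k) 1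
  | a :: k, b :: l =>
      Finsupp.mapDomain (a :: ·) (harmAux k (b :: l)) +
      Finsupp.mapDomain (b :: ·) (harmAux (a :: k) l) +
      Finsupp.mapDomain ((a + b) :: ·) (harmAux k l)
termination_by k l => k.length + l.length

/-- The harmonic (stuffle) product of two indices. -/
noncomputable def harm (k l : Idx) : Ical :=
  Finsupp.mapDomain List.reverse (harmAux k.reverse l.reverse)

/-- Bilinear extension of the harmonic product to 𝓘. -/
noncomputable def harmF (x y : Ical) : Ical :=
  x.sum fun k c => y.sum fun l d => (c * d) • harm k l

/-- The map σₙ on indices. -/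
noncomputable def sigma : ℕ → Idx → Ical
  | n, [] => if n = 0 then Finsupp.single [] 1 else 0
  | n, k :: ks =>
      ∑ a ∈ Finset.range (n + 1),
        ((k + a - 1).choose a : ℚ) •
          Finsupp.mapDomain (fun t => (k + a) :: t) (sigma (n - a) ks)

/-- Linear extension of σₙ to 𝓘. -/
noncomputable def sigmaL (n : ℕ) (x : Ical) : Ical :=
  x.sum fun k c => c • sigma n k

/-- The map ₘIₙ on indices. -/
noncomputable def mI (m n : ℕ) (ks : Idx) : Ical :=
  ∑ i ∈ Finset.range (ks.length + 1),
    ((-1 : ℚ)) ^ ((ks.drop i).sum) •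
      harmF (sigma m (ks.take i)) (sigma n ((ks.drop i).reverse))

/-- The index shuffle product ⧢̃ of two indices. -/
noncomputable def sh : Idx → Idx → Ical
  | [], l => Finsupp.single l 1
  | a :: k, [] => Finsupp.single (a :: k) 1
  | a :: k, b :: l =>
      Finsupp.mapDomain (a :: ·) (sh k (b :: l)) +
      Finsupp.mapDomain (b :: ·) (sh (a :: k) l)
termination_by k l => k.length + l.length

/-- The multiple zeta value of an index. -/
noncomputable def mzv (ks : List ℕ) : ℝ :=
  ∑' f : {f : Fin ks.length → ℕ // StrictMono f ∧ ∀ i, 0 < f i},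
    ∏ i, (1 / (f.1 i : ℝ) ^ ks.get i)

section Aux
open Finset Finset.Nat

/-- σₙ as a linear map on 𝓘. -/
noncomputable def SL (n : ℕ) : Ical →ₗ[ℚ] Ical :=
  Finsupp.lsum ℚ fun k => LinearMap.toSpanSingleton ℚ Ical (sigma n k)

/-- bilinear extension of `harmAux`. -/
noncomputable def HAx : Ical →ₗ[ℚ] Ical →ₗ[ℚ] Ical :=
  Finsupp.lsum ℚ fun k => LinearMap.toSpanSingleton ℚ (Ical →ₗ[ℚ] Ical)
    (Finsupp.lsum ℚ fun l => LinearMap.toSpanSingleton ℚ Ical (harmAux k l))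

/-- bilinear extension of `harm`. -/
noncomputable def Hb : Ical →ₗ[ℚ] Ical →ₗ[ℚ] Ical :=
  Finsupp.lsum ℚ fun k => LinearMap.toSpanSingleton ℚ (Ical →ₗ[ℚ] Ical)
    (Finsupp.lsum ℚ fun l => LinearMap.toSpanSingleton ℚ Ical (harm k l))

@[simp] lemma SL_single (n : ℕ) (k : Idx) (c : ℚ) :
    SL n (Finsupp.single k c) = c • sigma n k := by
  simp [SL, Finsupp.lsum_single, LinearMap.toSpanSingleton_apply]

@[simp] lemma HAx_single (k l : Idx) (c d : ℚ) :
    HAx (Finsupp.single k c) (Finsupp.single l d) = (c * d) • harmAux k l := by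
  simp [HAx, Finsupp.lsum_single, LinearMap.toSpanSingleton_apply, mul_smul]

@[simp] lemma Hb_single (k l : Idx) (c d : ℚ) :
    Hb (Finsupp.single k c) (Finsupp.single l d) = (c * d) • harm k l := by
  simp [Hb, Finsupp.lsum_single, LinearMap.toSpanSingleton_apply, mul_smul]

lemma sigma_nil (n : ℕ) : sigma n [] = if n = 0 then Finsupp.single [] 1 else 0 := by rw [sigma]

lemma sigma_cons (n c : ℕ) (t : Idx) : sigma n (c :: t) =
    ∑ a ∈ Finset.range (n + 1), ((c + a - 1).choose a : ℚ) •
      Finsupp.mapDomain (fun u => (c + a) :: u) (sigma (n - a) t) := by rw [sigma]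

lemma sigma_cons_ad (n c : ℕ) (t : Idx) : sigma n (c :: t) =
    ∑ p ∈ antidiagonal n, ((c + p.1 - 1).choose p.1 : ℚ) •
      Finsupp.mapDomain (fun u => (c + p.1) :: u) (sigma p.2 t) := by
  rw [sigma, Finset.Nat.sum_antidiagonal_eq_sum_range_succ_mk]

lemma sigma_zero (k : Idx) : sigma 0 k = Finsupp.single k 1 := by
  induction k with
  | nil => rw [sigma_nil]; simp
  | cons c t ih =>
      rw [sigma_cons]
      simp [ih, Finsupp.mapDomain_single]

lemma SL_mapDomain_cons (n c : ℕ) (x : Ical) :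
    SL n (Finsupp.mapDomain (fun u => c :: u) x) =
      ∑ p ∈ antidiagonal n, ((c + p.1 - 1).choose p.1 : ℚ) •
        Finsupp.mapDomain (fun u => (c + p.1) :: u) (SL p.2 x) := by
  induction x using Finsupp.induction_linear with
  | zero => simp [Finsupp.mapDomain_zero]
  | add f g hf hg =>
      rw [Finsupp.mapDomain_add, map_add, hf, hg, ← Finset.sum_add_distrib]
      apply Finset.sum_congr rfl
      intro p _
      rw [map_add, Finsupp.mapDomain_add, smul_add]
  | single k d =>
      rw [Finsupp.mapDomain_single, SL_single, sigma_cons_ad, Finset.smul_sum]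
      apply Finset.sum_congr rfl
      intro p _
      rw [SL_single, Finsupp.mapDomain_smul, smul_comm]

lemma harmAux_nil_right (k : Idx) : harmAux k [] = Finsupp.single k 1 := by
  cases k with
  | nil => rw [harmAux]
  | cons a t => rw [harmAux]

lemma HAx_one_left (y : Ical) : HAx (Finsupp.single [] 1) y = y := by
  induction y using Finsupp.induction_linear with
  | zero => simp
  | add f g hf hg => rw [map_add, hf, hg]
  | single l d => rw [HAx_single, harmAux, one_mul, Finsupp.smul_single, smul_eq_mul, mul_one]

lemma HAx_one_right (x : Ical) : HAx x (Finsupp.single [] 1) = x := by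
  induction x using Finsupp.induction_linear with
  | zero => simp
  | add f g hf hg => rw [map_add, LinearMap.add_apply, hf, hg]
  | single l d =>
      rw [HAx_single, harmAux_nil_right, mul_one, Finsupp.smul_single, smul_eq_mul, mul_one]

lemma HAx_cons_cons (a b : ℕ) (x y : Ical) :
    HAx (Finsupp.mapDomain (fun u => a :: u) x) (Finsupp.mapDomain (fun u => b :: u) y) =
      Finsupp.mapDomain (fun u => a :: u) (HAx x (Finsupp.mapDomain (fun u => b :: u) y)) +
      Finsupp.mapDomain (fun u => b :: u) (HAx (Finsupp.mapDomain (fun u => a :: u) x) y) +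
      Finsupp.mapDomain (fun u => (a + b) :: u) (HAx x y) := by
  induction x using Finsupp.induction_linear with
  | zero => simp [Finsupp.mapDomain_zero]
  | add f g hf hg =>
      simp only [Finsupp.mapDomain_add, map_add, LinearMap.add_apply] at *
      rw [hf, hg]; abel
  | single k c =>
      induction y using Finsupp.induction_linear with
      | zero => simp [Finsupp.mapDomain_zero]
      | add f g hf hg =>
          simp only [Finsupp.mapDomain_add, map_add, LinearMap.add_apply] at *
          rw [hf, hg]; abel
      | single l d =>
          simp only [Finsupp.mapDomain_single, HAx_single]
          rw [harmAux]
          simp only [Finsupp.mapDomain_smul, Finsupp.mapDomain_add, smul_add]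

section AD
variable {M : Type*} [AddCommMonoid M]


lemma adSwap (n : ℕ) (f : ℕ → ℕ → M) :
    ∑ p ∈ antidiagonal n, f p.1 p.2 = ∑ p ∈ antidiagonal n, f p.2 p.1 := by
  have := Finset.Nat.sum_antidiagonal_swap (n := n) (f := fun p => f p.1 p.2)
  simpa [Prod.swap] using this.symm

lemma adAssoc (n : ℕ) (f : ℕ → ℕ → ℕ → M) :
    ∑ p ∈ antidiagonal n, ∑ q ∈ antidiagonal p.2, f p.1 q.1 q.2
      = ∑ p ∈ antidiagonal n, ∑ q ∈ antidiagonal p.1, f q.1 q.2 p.2 := by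
  rw [Finset.sum_sigma', Finset.sum_sigma']
  refine Finset.sum_nbij' (fun x => ⟨(x.1.1 + x.2.1, x.2.2), (x.1.1, x.2.1)⟩)
    (fun x => ⟨(x.2.1, x.2.2 + x.1.2), (x.2.2, x.1.2)⟩) ?_ ?_ ?_ ?_ ?_
  · rintro ⟨⟨a, b⟩, ⟨c, d⟩⟩ h
    simp only [Finset.mem_sigma, Finset.HasAntidiagonal.mem_antidiagonal] at h ⊢
    exact ⟨by omega, trivial⟩
  · rintro ⟨⟨a, b⟩, ⟨c, d⟩⟩ h
    simp only [Finset.mem_sigma, Finset.HasAntidiagonal.mem_antidiagonal] at h ⊢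
    exact ⟨by omega, trivial⟩
  · rintro ⟨⟨a, b⟩, ⟨c, d⟩⟩ h
    simp only [Finset.mem_sigma, Finset.HasAntidiagonal.mem_antidiagonal] at h
    simp [← h.2]
  · rintro ⟨⟨a, b⟩, ⟨c, d⟩⟩ h
    simp only [Finset.mem_sigma, Finset.HasAntidiagonal.mem_antidiagonal] at h
    simp [← h.2]
  · rintro ⟨⟨a, b⟩, ⟨c, d⟩⟩ h
    rfl

lemma adMid (n : ℕ) (f : ℕ → ℕ → ℕ → M) :
    ∑ p ∈ antidiagonal n, ∑ q ∈ antidiagonal p.2, f p.1 q.1 q.2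
      = ∑ p ∈ antidiagonal n, ∑ q ∈ antidiagonal p.2, f q.1 p.1 q.2 := by
  rw [adAssoc n f]
  have : ∀ p : ℕ × ℕ, ∑ q ∈ antidiagonal p.1, f q.1 q.2 p.2
      = ∑ q ∈ antidiagonal p.1, f q.2 q.1 p.2 := fun p => adSwap p.1 (fun x y => f x y p.2)
  rw [Finset.sum_congr rfl fun p _ => this p]
  exact (adAssoc n (fun a b c => f b a c)).symm

end AD


lemma sigma_append (c : ℕ) : ∀ (n : ℕ) (t : Idx), sigma n (t ++ [c]) =
    ∑ p ∈ antidiagonal n, ((c + p.1 - 1).choose p.1 : ℚ) •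
      Finsupp.mapDomain (fun u => u ++ [c + p.1]) (sigma p.2 t) := by
  intro n t
  induction t generalizing n with
  | nil =>
      rw [List.nil_append, sigma_cons_ad]
      apply Finset.sum_congr rfl
      intro p _
      rw [sigma_nil]
      split
      · rw [Finsupp.mapDomain_single, Finsupp.mapDomain_single]
        rfl
      · simp
  | cons d t ih =>
      rw [List.cons_append, sigma_cons_ad]
      have L : ∑ p ∈ antidiagonal n, ((d + p.1 - 1).choose p.1 : ℚ) •
            Finsupp.mapDomain (fun u => (d + p.1) :: u) (sigma p.2 (t ++ [c]))
          = ∑ p ∈ antidiagonal n, ∑ q ∈ antidiagonal p.2,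
              (((d + p.1 - 1).choose p.1 : ℚ) * ((c + q.1 - 1).choose q.1 : ℚ)) •
                Finsupp.mapDomain (fun u => (d + p.1) :: (u ++ [c + q.1])) (sigma q.2 t) := by
        apply Finset.sum_congr rfl
        intro p _
        rw [ih, Finsupp.mapDomain_finset_sum, Finset.smul_sum]
        apply Finset.sum_congr rfl
        intro q _
        rw [Finsupp.mapDomain_smul, smul_smul, ← Finsupp.mapDomain_comp]
        rfl
      rw [L]
      have R : ∑ p ∈ antidiagonal n, ((c + p.1 - 1).choose p.1 : ℚ) •
            Finsupp.mapDomain (fun u => u ++ [c + p.1]) (sigma p.2 (d :: t))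
          = ∑ p ∈ antidiagonal n, ∑ q ∈ antidiagonal p.2,
              (((d + q.1 - 1).choose q.1 : ℚ) * ((c + p.1 - 1).choose p.1 : ℚ)) •
                Finsupp.mapDomain (fun u => (d + q.1) :: (u ++ [c + p.1])) (sigma q.2 t) := by
        apply Finset.sum_congr rfl
        intro p _
        rw [sigma_cons_ad, Finsupp.mapDomain_finset_sum, Finset.smul_sum]
        apply Finset.sum_congr rfl
        intro q _
        rw [Finsupp.mapDomain_smul, smul_smul, ← Finsupp.mapDomain_comp, mul_comm]
        rfl
      rw [R]
      exact (adMid n (fun i j m => (((d + i - 1).choose i : ℚ) * ((c + j - 1).choose j : ℚ)) •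
        Finsupp.mapDomain (fun u => (d + i) :: (u ++ [c + j])) (sigma m t)))

lemma sigma_reverse : ∀ (n : ℕ) (t : Idx),
    sigma n t.reverse = Finsupp.mapDomain List.reverse (sigma n t) := by
  intro n t
  induction t generalizing n with
  | nil =>
      rw [List.reverse_nil, sigma_nil]
      split
      · rw [Finsupp.mapDomain_single, List.reverse_nil]
      · rw [Finsupp.mapDomain_zero]
  | cons c t ih =>
      rw [List.reverse_cons, sigma_append, sigma_cons_ad, Finsupp.mapDomain_finset_sum]
      apply Finset.sum_congr rfl
      intro p _
      rw [ih, ← Finsupp.mapDomain_comp, Finsupp.mapDomain_smul, ← Finsupp.mapDomain_comp]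
      congr 1
      apply Finsupp.mapDomain_congr
      intro u _
      simp [Function.comp]

lemma SL_mapDomain_reverse (n : ℕ) (x : Ical) :
    SL n (Finsupp.mapDomain List.reverse x) = Finsupp.mapDomain List.reverse (SL n x) := by
  induction x using Finsupp.induction_linear with
  | zero => simp [Finsupp.mapDomain_zero]
  | add f g hf hg => rw [Finsupp.mapDomain_add, map_add, hf, hg, map_add, Finsupp.mapDomain_add]
  | single k d =>
      rw [Finsupp.mapDomain_single, SL_single, SL_single, Finsupp.mapDomain_smul, ← sigma_reverse]

lemma mapRev_HAx (x y : Ical) :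
    Finsupp.mapDomain List.reverse (HAx x y)
      = Hb (Finsupp.mapDomain List.reverse x) (Finsupp.mapDomain List.reverse y) := by
  induction x using Finsupp.induction_linear with
  | zero => simp [Finsupp.mapDomain_zero]
  | add f g hf hg =>
      simp only [Finsupp.mapDomain_add, map_add, LinearMap.add_apply] at *
      rw [hf, hg]
  | single k c =>
      induction y using Finsupp.induction_linear with
      | zero => simp [Finsupp.mapDomain_zero]
      | add f g hf hg =>
          simp only [Finsupp.mapDomain_add, map_add] at *
          rw [hf, hg]
      | single l d =>
          rw [Finsupp.mapDomain_single, Finsupp.mapDomain_single, HAx_single, Hb_single,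
            Finsupp.mapDomain_smul]
          congr 1
          rw [harm, List.reverse_reverse, List.reverse_reverse]



lemma hockey (k : ℕ) : ∀ c, ∑ a ∈ range (c+1), Nat.multichoose k a = Nat.multichoose (k+1) c := by
  intro c
  induction c with
  | zero => simp [Nat.multichoose_zero_right]
  | succ c ih =>
      rw [Finset.sum_range_succ, ih, Nat.multichoose_succ_succ, Nat.add_comm]

noncomputable def uPS : PowerSeries ℚ := PowerSeries.mk fun _ => (1:ℚ)

lemma uPS_pow (k : ℕ) : uPS ^ k = PowerSeries.mk fun a => (Nat.multichoose k a : ℚ) := by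
  induction k with
  | zero =>
      ext n
      simp only [pow_zero, PowerSeries.coeff_mk, PowerSeries.coeff_one]
      cases n with
      | zero => simp [Nat.multichoose_zero_right]
      | succ n => simp [Nat.multichoose_zero_succ]
  | succ k ih =>
      ext n
      rw [pow_succ, ih, PowerSeries.coeff_mul]
      simp only [PowerSeries.coeff_mk, uPS, mul_one]
      rw [Finset.Nat.sum_antidiagonal_eq_sum_range_succ_mk]
      simp only [PowerSeries.coeff_mk]
      rw_mod_cast [hockey k n]

lemma mc_vandermonde (k l c : ℕ) :
    ∑ p ∈ antidiagonal c, (Nat.multichoose k p.1 : ℚ) * (Nat.multichoose l p.2 : ℚ)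
      = (Nat.multichoose (k+l) c : ℚ) := by
  have h : uPS ^ k * uPS ^ l = uPS ^ (k + l) := (pow_add uPS k l).symm
  have h2 := congrArg (PowerSeries.coeff (R := ℚ) c) h
  rw [PowerSeries.coeff_mul, uPS_pow, uPS_pow, uPS_pow] at h2
  simpa using h2

lemma choose_vandermonde (a b s : ℕ) :
    ((a + b + s - 1).choose s : ℚ)
      = ∑ p ∈ antidiagonal s, ((a + p.1 - 1).choose p.1 : ℚ) * ((b + p.2 - 1).choose p.2 : ℚ) := by
  rw [← Nat.multichoose_eq, ← mc_vandermonde]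
  apply Finset.sum_congr rfl
  intro p _
  rw [Nat.multichoose_eq, Nat.multichoose_eq]


noncomputable def C2 (a i : ℕ) : ℚ := ((a + i - 1).choose i : ℚ)

noncomputable def G1 (a b : ℕ) (k l : Idx) (i q j m : ℕ) : Ical :=
  (C2 a i * C2 b j) • Finsupp.mapDomain (fun u => (a + i) :: u)
    (HAx (sigma q k) (Finsupp.mapDomain (fun u => (b + j) :: u) (sigma m l)))

noncomputable def G2 (a b : ℕ) (k l : Idx) (i q j m : ℕ) : Ical :=
  (C2 a i * C2 b j) • Finsupp.mapDomain (fun u => (b + j) :: u)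
    (HAx (Finsupp.mapDomain (fun u => (a + i) :: u) (sigma q k)) (sigma m l))

noncomputable def G3 (a b : ℕ) (k l : Idx) (i q j m : ℕ) : Ical :=
  (C2 a i * C2 b j) • Finsupp.mapDomain (fun u => (a + i + (b + j)) :: u)
    (HAx (sigma q k) (sigma m l))

set_option maxHeartbeats 2000000 in
lemma coreAux : ∀ (k l : Idx) (n : ℕ),
    SL n (harmAux k l) = ∑ p ∈ antidiagonal n, HAx (sigma p.1 k) (sigma p.2 l) := by
  intro k l
  induction k, l using harmAux.induct with
  | case1 l =>
      intro n
      rw [harmAux, SL_single, one_smul]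
      rw [Finset.sum_eq_single (0, n)]
      · rw [sigma_zero, HAx_one_left]
      · intro p hp hne
        have h1 : p.1 ≠ 0 := by
          rcases p with ⟨p1, p2⟩
          simp only [Finset.HasAntidiagonal.mem_antidiagonal] at hp
          intro h; apply hne
          simp only at h
          subst h; simp at hp; simp [hp]
        rw [sigma_nil, if_neg h1, map_zero, LinearMap.zero_apply]
      · intro h
        exact absurd (by simp [Finset.HasAntidiagonal.mem_antidiagonal]) h
  | case2 a k =>
      intro n
      rw [harmAux, SL_single, one_smul]
      rw [Finset.sum_eq_single (n, 0)]
      · rw [sigma_zero, HAx_one_right]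
      · intro p hp hne
        have h2 : p.2 ≠ 0 := by
          rcases p with ⟨p1, p2⟩
          simp only [Finset.HasAntidiagonal.mem_antidiagonal] at hp
          intro h; apply hne
          simp only at h
          subst h; simp at hp; simp [hp]
        rw [sigma_nil, if_neg h2, map_zero]
      · intro h
        exact absurd (by simp [Finset.HasAntidiagonal.mem_antidiagonal]) h
  | case3 a k b l IH1 IH2 IH3 =>
      intro n
      rw [harmAux, map_add, map_add]
      -- LHS group 1
      have L1 : SL n (Finsupp.mapDomain (fun u => a :: u) (harmAux k (b :: l)))
          = ∑ p ∈ antidiagonal n, ∑ q ∈ antidiagonal p.2, ∑ r ∈ antidiagonal q.2,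
              G1 a b k l p.1 q.1 r.1 r.2 := by
        rw [SL_mapDomain_cons]
        apply Finset.sum_congr rfl
        intro p _
        rw [IH1, Finsupp.mapDomain_finset_sum, Finset.smul_sum]
        apply Finset.sum_congr rfl
        intro q _
        rw [sigma_cons_ad q.2 b l, map_sum, Finsupp.mapDomain_finset_sum, Finset.smul_sum]
        apply Finset.sum_congr rfl
        intro r _
        rw [map_smul, Finsupp.mapDomain_smul, smul_smul]
        simp only [G1, C2]
      -- LHS group 2
      have L2 : SL n (Finsupp.mapDomain (fun u => b :: u) (harmAux (a :: k) l))
          = ∑ p ∈ antidiagonal n, ∑ q ∈ antidiagonal p.2, ∑ r ∈ antidiagonal q.2,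
              G2 a b k l p.1 q.1 r.1 r.2 := by
        have e1 : SL n (Finsupp.mapDomain (fun u => b :: u) (harmAux (a :: k) l))
            = ∑ p ∈ antidiagonal n, ∑ q ∈ antidiagonal p.2, ∑ r ∈ antidiagonal q.1,
                G2 a b k l r.1 r.2 p.1 q.2 := by
          rw [SL_mapDomain_cons]
          apply Finset.sum_congr rfl
          intro p _
          rw [IH2, Finsupp.mapDomain_finset_sum, Finset.smul_sum]
          apply Finset.sum_congr rfl
          intro q _
          rw [sigma_cons_ad q.1 a k, map_sum, LinearMap.sum_apply, Finsupp.mapDomain_finset_sum,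
            Finset.smul_sum]
          apply Finset.sum_congr rfl
          intro r _
          rw [map_smul, LinearMap.smul_apply, Finsupp.mapDomain_smul, smul_smul, mul_comm]
          simp only [G2, C2]
        rw [e1]
        have e2 : ∀ p : ℕ × ℕ, ∑ q ∈ antidiagonal p.2, ∑ r ∈ antidiagonal q.1,
              G2 a b k l r.1 r.2 p.1 q.2
            = ∑ q ∈ antidiagonal p.2, ∑ r ∈ antidiagonal q.2,
              G2 a b k l q.1 r.1 p.1 r.2 :=
          fun p => (adAssoc p.2 (fun x y z => G2 a b k l x y p.1 z)).symm
        rw [Finset.sum_congr rfl fun p _ => e2 p]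
        rw [← adMid n (fun x y w => ∑ r ∈ antidiagonal w, G2 a b k l x r.1 y r.2)]
        apply Finset.sum_congr rfl
        intro p _
        exact adMid p.2 (fun x y z => G2 a b k l p.1 y x z)
      -- LHS group 3
      have L3 : SL n (Finsupp.mapDomain (fun u => (a + b) :: u) (harmAux k l))
          = ∑ p ∈ antidiagonal n, ∑ q ∈ antidiagonal p.2, ∑ r ∈ antidiagonal q.2,
              G3 a b k l p.1 q.1 r.1 r.2 := by
        have e1 : SL n (Finsupp.mapDomain (fun u => (a + b) :: u) (harmAux k l))
            = ∑ p ∈ antidiagonal n, ∑ r ∈ antidiagonal p.1, ∑ q ∈ antidiagonal p.2,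
                G3 a b k l r.1 q.1 r.2 q.2 := by
          rw [SL_mapDomain_cons]
          apply Finset.sum_congr rfl
          intro p _
          rw [IH3, Finsupp.mapDomain_finset_sum, Finset.smul_sum]
          rw [Finset.sum_comm]
          have hv : ((a + b + p.1 - 1).choose p.1 : ℚ)
              = ∑ r ∈ antidiagonal p.1, C2 a r.1 * C2 b r.2 := by
            rw [choose_vandermonde]
            apply Finset.sum_congr rfl
            intro r _
            rfl
          apply Finset.sum_congr rfl
          intro q _
          rw [hv, Finset.sum_smul]
          apply Finset.sum_congr rfl
          intro r hr
          simp only [G3]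
          have harith : a + r.1 + (b + r.2) = a + b + p.1 := by
            have := Finset.HasAntidiagonal.mem_antidiagonal.mp hr
            omega
          rw [harith]
        rw [e1]
        have e2 : ∑ p ∈ antidiagonal n, ∑ r ∈ antidiagonal p.1,
              (∑ q ∈ antidiagonal p.2, G3 a b k l r.1 q.1 r.2 q.2)
            = ∑ p ∈ antidiagonal n, ∑ q ∈ antidiagonal p.2,
              (∑ s ∈ antidiagonal q.2, G3 a b k l p.1 s.1 q.1 s.2) :=
          (adAssoc n (fun x y w => ∑ s ∈ antidiagonal w, G3 a b k l x s.1 y s.2)).symm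
        rw [e2]
        apply Finset.sum_congr rfl
        intro p _
        exact adMid p.2 (fun x y w => G3 a b k l p.1 y x w)
      rw [L1, L2, L3]
      -- RHS expansion
      have R0 : ∑ p ∈ antidiagonal n, HAx (sigma p.1 (a :: k)) (sigma p.2 (b :: l))
          = ∑ p ∈ antidiagonal n, ∑ q ∈ antidiagonal p.1, ∑ r ∈ antidiagonal p.2,
              (G1 a b k l q.1 q.2 r.1 r.2 + G2 a b k l q.1 q.2 r.1 r.2
                + G3 a b k l q.1 q.2 r.1 r.2) := by
        apply Finset.sum_congr rfl
        intro p _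
        rw [sigma_cons_ad p.1 a k, map_sum, LinearMap.sum_apply]
        apply Finset.sum_congr rfl
        intro q _
        rw [sigma_cons_ad p.2 b l, map_smul, LinearMap.smul_apply, map_sum, Finset.smul_sum]
        apply Finset.sum_congr rfl
        intro r _
        rw [map_smul, smul_smul, HAx_cons_cons, smul_add, smul_add]
        simp only [G1, G2, G3, C2]
      rw [R0,
        ← adAssoc n (fun x y w => ∑ r ∈ antidiagonal w, (G1 a b k l x y r.1 r.2
          + G2 a b k l x y r.1 r.2 + G3 a b k l x y r.1 r.2))]
      simp only [Finset.sum_add_distrib]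

lemma core_harm (n : ℕ) (k l : Idx) :
    SL n (harm k l) = ∑ p ∈ antidiagonal n, Hb (sigma p.1 k) (sigma p.2 l) := by
  rw [harm, SL_mapDomain_reverse, coreAux, Finsupp.mapDomain_finset_sum]
  apply Finset.sum_congr rfl
  intro p _
  rw [mapRev_HAx, ← sigma_reverse, ← sigma_reverse, List.reverse_reverse, List.reverse_reverse]

lemma sigmaL_eq (n : ℕ) (x : Ical) : sigmaL n x = SL n x := by
  rw [sigmaL, SL, Finsupp.lsum_apply]
  rfl

lemma harmF_eq (x y : Ical) : harmF x y = Hb x y := by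
  induction x using Finsupp.induction_linear with
  | zero => rw [harmF, Finsupp.sum_zero_index, map_zero, LinearMap.zero_apply]
  | add f g hf hg =>
      rw [map_add, LinearMap.add_apply, ← hf, ← hg, harmF, harmF, harmF,
        Finsupp.sum_add_index']
      · intro k
        simp
      · intro k c1 c2
        simp only [Finsupp.sum, ← Finset.sum_add_distrib, add_mul, add_smul]
  | single k c =>
      rw [harmF, Finsupp.sum_single_index (by simp)]
      induction y using Finsupp.induction_linear with
      | zero => rw [Finsupp.sum_zero_index, map_zero]
      | add f g hf hg =>
          rw [map_add, ← hf, ← hg, Finsupp.sum_add_index']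
          · intro l
            simp
          · intro l d1 d2
            rw [mul_add, add_smul]
      | single l d =>
          rw [Finsupp.sum_single_index (by simp), Hb_single]

end Aux

/-- ∑_{i=0}^{n} ᵢI_{n-i}(𝐤) = σₙ(I₀(𝐤)). -/
theorem sum_mI_eq_sigmaL_I0 (n : ℕ) (ks : Idx) (hks : ∀ x ∈ ks, 0 < x) :
    ∑ i ∈ Finset.range (n + 1), mI i (n - i) ks = sigmaL n (mI 0 0 ks) := by
  rw [sigmaL_eq]
  unfold mI
  rw [Finset.sum_comm, map_sum]
  apply Finset.sum_congr rfl
  intro t _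
  rw [← Finset.smul_sum, map_smul]
  congr 1
  rw [harmF_eq, sigma_zero, sigma_zero, Hb_single, one_mul, one_smul, core_harm,
    Finset.Nat.sum_antidiagonal_eq_sum_range_succ_mk]
  apply Finset.sum_congr rfl
  intro x _
  rw [harmF_eq]
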